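/- Let A be a self-adjoint d×d complex matrix, let R > 0, and let f_R : ℝ → [−R, R] be the truncation function f_R(t) = max(−R, min(R, t)). Let M, M' be positive integers with M' even and M' ≥ M. Then, with ‖X‖_p = τ_d(|X|^p)^{1/p} denoting the p-norm with respect to the normalized trace τ_d, one has ‖A − f_R(A)‖_M ≤ R·(τ_d(A^{M'})/R^{M'})^{1/M}. -/

import Mathlib

open Matrix Polynomial

/-- Powers of a unitary conjugate. -/
private lemma conj_pow_aux {d : ℕ} (U X : Matrix (Fin d) (Fin d) ℂ)
    (hU : U * star U = 1) (hU' : star U * U = 1) (k : ℕ) :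
    (U * X * star U) ^ k = U * X ^ k * star U := by
  induction k with
  | zero => simp [hU]
  | succ n ih =>
      rw [pow_succ, ih, pow_succ]
      simp only [Matrix.mul_assoc]
      rw [show star U * (U * (X * star U)) = X * star U from by
        rw [← Matrix.mul_assoc, hU', Matrix.one_mul]]

/-- Trace of a unitary conjugate. -/
private lemma trace_conj_aux {d : ℕ} (U X : Matrix (Fin d) (Fin d) ℂ)
    (hU' : star U * U = 1) : (U * X * star U).trace = X.trace := by
  rw [Matrix.trace_mul_comm, ← Matrix.mul_assoc, hU', Matrix.one_mul]

/-- Determinant of `x • 1 - U * diagonal v * star U`. -/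
private lemma det_aux {d : ℕ} (U : Matrix (Fin d) (Fin d) ℂ)
    (hU : U * star U = 1) (v : Fin d → ℂ) (x : ℂ) :
    (x • (1 : Matrix (Fin d) (Fin d) ℂ) - U * diagonal v * star U).det
      = ∏ i, (x - v i) := by
  have hc : U * (diagonal fun _ : Fin d => x) * star U = diagonal fun _ : Fin d => x := by
    rw [← Matrix.smul_one_eq_diagonal, Matrix.mul_smul, Matrix.smul_mul, Matrix.mul_one, hU]
  have h1 : x • (1 : Matrix (Fin d) (Fin d) ℂ) - U * diagonal v * star U
      = U * (diagonal (fun i => x - v i)) * star U := by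
    rw [Matrix.smul_one_eq_diagonal]
    calc (diagonal fun _ : Fin d => x) - U * diagonal v * star U
        = U * (diagonal fun _ : Fin d => x) * star U - U * diagonal v * star U := by rw [hc]
      _ = U * ((diagonal fun _ : Fin d => x) - diagonal v) * star U := by
          rw [Matrix.mul_sub, Matrix.sub_mul]
      _ = U * (diagonal (fun i => x - v i)) * star U := by rw [← Matrix.diagonal_sub]
  rw [h1, Matrix.det_mul, Matrix.det_mul]
  have hdet1 : U.det * (star U).det = 1 := by rw [← Matrix.det_mul, hU, Matrix.det_one]
  calc U.det * (diagonal fun i => x - v i).det * (star U).det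
      = (U.det * (star U).det) * (diagonal fun i => x - v i).det := by ring
    _ = ∏ i, (x - v i) := by rw [hdet1, one_mul, Matrix.det_diagonal]

/-- If a Hermitian matrix is a unitary conjugate of a real diagonal matrix, then its
eigenvalue multiset is the multiset of diagonal entries. -/
private lemma eig_multiset_aux {d : ℕ} {D : Matrix (Fin d) (Fin d) ℂ}
    (hD : D.IsHermitian) (U : Matrix (Fin d) (Fin d) ℂ)
    (hU : U * star U = 1) (w : Fin d → ℝ)
    (hDeq : D = U * diagonal (fun i => (w i : ℂ)) * star U) :
    Multiset.map w Finset.univ.val = Multiset.map hD.eigenvalues Finset.univ.val := by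
  set V : Matrix (Fin d) (Fin d) ℂ := (hD.eigenvectorUnitary : Matrix (Fin d) (Fin d) ℂ)
  have hV : V * star V = 1 := (Matrix.mem_unitaryGroup_iff).mp hD.eigenvectorUnitary.2
  have hDeq' : D = V * diagonal (fun i => ((hD.eigenvalues i : ℝ) : ℂ)) * star V := by
    exact hD.spectral_theorem
  -- the two product polynomials agree
  have hpoly : (∏ i, (X - C ((w i : ℂ)))) = ∏ i, (X - C ((hD.eigenvalues i : ℝ) : ℂ)) := by
    apply Polynomial.funext
    intro x
    have h1 := det_aux U hU (fun i => (w i : ℂ)) x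
    have h2 := det_aux V hV (fun i => ((hD.eigenvalues i : ℝ) : ℂ)) x
    rw [← hDeq] at h1
    rw [← hDeq'] at h2
    simp only [eval_prod, eval_sub, eval_X, eval_C]
    rw [← h1, ← h2]
  -- pass to roots
  have hroots : Multiset.map (fun i => ((w i : ℝ) : ℂ)) Finset.univ.val
      = Multiset.map (fun i => ((hD.eigenvalues i : ℝ) : ℂ)) Finset.univ.val := by
    have r1 := Polynomial.roots_multiset_prod_X_sub_C
      (Multiset.map (fun i => ((w i : ℝ) : ℂ)) Finset.univ.val)
    have r2 := Polynomial.roots_multiset_prod_X_sub_C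
      (Multiset.map (fun i => ((hD.eigenvalues i : ℝ) : ℂ)) Finset.univ.val)
    rw [Multiset.map_map] at r1 r2
    have e1 : ((Multiset.map ((fun a => X - C a) ∘ fun i => ((w i : ℝ) : ℂ))
        Finset.univ.val)).prod = ∏ i, (X - C ((w i : ℂ))) := rfl
    have e2 : ((Multiset.map ((fun a => X - C a) ∘ fun i => ((hD.eigenvalues i : ℝ) : ℂ))
        Finset.univ.val)).prod = ∏ i, (X - C ((hD.eigenvalues i : ℝ) : ℂ)) := rfl
    rw [e1] at r1; rw [e2] at r2
    rw [← r1, ← r2, hpoly]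
  have := congrArg (Multiset.map Complex.re) hroots
  rw [Multiset.map_map, Multiset.map_map] at this
  simpa [Function.comp] using this

theorem truncation_pnorm_estimate (d : ℕ) (hd : 0 < d)
    (A : Matrix (Fin d) (Fin d) ℂ) (hA : A.IsHermitian) (R : ℝ) (hR : 0 < R)
    (M M' : ℕ) (hM : 0 < M) (hM'pos : 0 < M') (hM'even : Even M') (hMM' : M ≤ M')
    (hD : (A - hA.cfc (fun t => max (-R) (min R t))).IsHermitian) :
    ((d : ℝ)⁻¹ * ∑ i, |hD.eigenvalues i| ^ M) ^ ((M : ℝ))⁻¹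
      ≤ R * (((d : ℝ)⁻¹ * (A ^ M').trace.re) / R ^ M') ^ ((M : ℝ))⁻¹ := by
  classical
  set f : ℝ → ℝ := fun t => max (-R) (min R t) with hf
  set lam : Fin d → ℝ := hA.eigenvalues with hlam
  set U : Matrix (Fin d) (Fin d) ℂ := (hA.eigenvectorUnitary : Matrix (Fin d) (Fin d) ℂ) with hUdef
  have hU : U * star U = 1 := (Matrix.mem_unitaryGroup_iff).mp hA.eigenvectorUnitary.2
  have hU' : star U * U = 1 := (Matrix.mem_unitaryGroup_iff').mp hA.eigenvectorUnitary.2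
  set g : ℝ → ℝ := fun t => t - f t with hg
  -- D as a unitary conjugate of a diagonal matrix
  have hDiag : A - hA.cfc f = U * diagonal (fun i => ((g (lam i) : ℝ) : ℂ)) * star U := by
    have h1 : A = U * diagonal (fun i => ((lam i : ℝ) : ℂ)) * star U := by
      exact hA.spectral_theorem
    have h2 : hA.cfc f = U * diagonal (fun i => ((f (lam i) : ℝ) : ℂ)) * star U := rfl
    rw [h2]
    conv_lhs => rw [h1]
    rw [← Matrix.sub_mul, ← Matrix.mul_sub, Matrix.diagonal_sub]
    congr 2
    funext i
    simp [hg, Complex.ofReal_sub]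
  -- eigenvalue multiset of D
  have hMult := eig_multiset_aux hD U hU (fun i => g (lam i)) hDiag
  -- sum identity
  have hsum : ∑ i, |hD.eigenvalues i| ^ M = ∑ i, |g (lam i)| ^ M := by
    have := congrArg (fun s => (Multiset.map (fun t : ℝ => |t| ^ M) s).sum) hMult
    simp only [Multiset.map_map] at this
    simpa [Finset.sum] using this.symm
  -- trace of A ^ M'
  have htrace : (A ^ M').trace.re = ∑ i, lam i ^ M' := by
    have h1 : A = U * diagonal (fun i => ((lam i : ℝ) : ℂ)) * star U := by
      exact hA.spectral_theorem
    have h2 : (A ^ M') = U * (diagonal (fun i => ((lam i : ℝ) : ℂ))) ^ M' * star U := by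
      conv_lhs => rw [h1]
      rw [conj_pow_aux U _ hU hU']
    rw [h2, trace_conj_aux _ _ hU', Matrix.diagonal_pow, Matrix.trace_diagonal]
    simp [← Complex.ofReal_pow]
  -- pointwise bound : |g t| ^ M * R ^ M' ≤ R ^ M * t ^ M'
  have hpoint : ∀ t : ℝ, |g t| ^ M * R ^ M' ≤ R ^ M * t ^ M' := by
    intro t
    rcases le_or_gt |t| R with h | h
    · have hg0 : g t = 0 := by
        have h1 : -R ≤ t := neg_le_of_abs_le h
        have h2 : t ≤ R := le_of_abs_le h
        simp [hg, hf, min_eq_right h2, max_eq_right h1]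
      have : (0:ℝ) ≤ R ^ M * t ^ M' := by
        have := hM'even.pow_nonneg t
        positivity
      simpa [hg0, zero_pow hM.ne'] using this
    · have habs : |g t| = |t| - R := by
        rcases le_or_gt t 0 with ht | ht
        · have h1 : t < -R := by
            have : |t| = -t := abs_of_nonpos ht
            linarith [this ▸ h]
          have : f t = -R := by
            simp only [hf]
            rw [min_eq_right (by linarith), max_eq_left (by linarith)]
          rw [hg]; simp only [this]
          rw [abs_of_nonpos (by linarith), abs_of_nonpos ht]; ring
        · have h1 : R < t := by
            have : |t| = t := abs_of_pos ht
            linarith [this ▸ h]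
          have : f t = R := by
            simp only [hf]
            rw [min_eq_left (by linarith), max_eq_right (by linarith)]
          rw [hg]; simp only [this]
          rw [abs_of_nonneg (by linarith), abs_of_pos ht]
      have h0 : (0:ℝ) ≤ |t| - R := by linarith
      have key : (|t| - R) ^ M * R ^ (M' - M) ≤ |t| ^ M' := by
        have e1 : (|t| - R) ^ M ≤ |t| ^ M :=
          pow_le_pow_left₀ h0 (by linarith) M
        have e2 : R ^ (M' - M) ≤ |t| ^ (M' - M) :=
          pow_le_pow_left₀ hR.le h.le _
        calc (|t| - R) ^ M * R ^ (M' - M) ≤ |t| ^ M * |t| ^ (M' - M) :=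
              mul_le_mul e1 e2 (by positivity) (by positivity)
          _ = |t| ^ M' := by rw [← pow_add]; congr 1; omega
      have : (|t| - R) ^ M * R ^ M' ≤ R ^ M * |t| ^ M' := by
        have : (|t| - R) ^ M * R ^ M' = ((|t| - R) ^ M * R ^ (M' - M)) * R ^ M := by
          rw [mul_assoc, ← pow_add]; congr 2; omega
        rw [this]
        calc ((|t| - R) ^ M * R ^ (M' - M)) * R ^ M ≤ |t| ^ M' * R ^ M :=
              mul_le_mul_of_nonneg_right key (by positivity)
          _ = R ^ M * |t| ^ M' := by ring
      rw [habs]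
      calc (|t| - R) ^ M * R ^ M' ≤ R ^ M * |t| ^ M' := this
        _ = R ^ M * t ^ M' := by rw [← abs_pow, abs_of_nonneg (hM'even.pow_nonneg t)]
  -- summed bound
  have hsumbound : (∑ i, |g (lam i)| ^ M) * R ^ M' ≤ R ^ M * ∑ i, lam i ^ M' := by
    rw [Finset.sum_mul, Finset.mul_sum]
    exact Finset.sum_le_sum fun i _ => hpoint (lam i)
  -- nonnegativity facts
  have hdpos : (0:ℝ) < (d:ℝ)⁻¹ := by positivity
  have hTnn : (0:ℝ) ≤ ∑ i, lam i ^ M' :=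
    Finset.sum_nonneg fun i _ => hM'even.pow_nonneg _
  have hSnn : (0:ℝ) ≤ ∑ i, |hD.eigenvalues i| ^ M :=
    Finset.sum_nonneg fun i _ => by positivity
  -- base inequality
  have hbase : (d:ℝ)⁻¹ * ∑ i, |hD.eigenvalues i| ^ M
      ≤ R ^ M * (((d:ℝ)⁻¹ * (A ^ M').trace.re) / R ^ M') := by
    rw [hsum, htrace, mul_div_assoc', le_div_iff₀ (by positivity)]
    nlinarith [hsumbound, hdpos.le]
  -- take M-th roots
  have hMnn : (0:ℝ) ≤ (M:ℝ)⁻¹ := by positivity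
  have step := Real.rpow_le_rpow (by positivity) hbase hMnn
  refine le_trans step ?_
  have hxnn : (0:ℝ) ≤ ((d:ℝ)⁻¹ * (A ^ M').trace.re) / R ^ M' := by
    rw [htrace]; positivity
  rw [Real.mul_rpow (by positivity) hxnn]
  have : ((R:ℝ) ^ M) ^ ((M:ℝ))⁻¹ = R := by
    rw [← Real.rpow_natCast R M, ← Real.rpow_mul hR.le,
      mul_inv_cancel₀ (by exact_mod_cast hM.ne'), Real.rpow_one]
  rw [this]
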